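/- For any d×N real Parseval frame E (i.e., E E* = I_d) and a simple connected weighted graph G on N ≥ d ≥ 2 vertices, the sum of the d smallest eigenvalues of L + Δ ≤ ‖D_r χ* E*‖²_{fr} + ‖D_r E*‖²_{fr} ≤ sum of the d largest eigenvalues of L + Δ, and both bounds are attained by suitable Parseval frames. -/
import Mathlib


open Matrix BigOperators


lemma sum_bounds_aux {N d : ℕ} (hd : 1 ≤ d) (hdN : d ≤ N) (lam : Fin N → ℝ)
    (hmono : Monotone lam) (c : Fin N → ℝ) (h0 : ∀ j, 0 ≤ c j) (h1 : ∀ j, c j ≤ 1)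
    (hs : ∑ j, c j = d) :
    (∑ j ∈ Finset.univ.filter (fun j : Fin N => (j : ℕ) < d), lam j) ≤ (∑ j, c j * lam j) ∧
      (∑ j, c j * lam j) ≤ ∑ j ∈ Finset.univ.filter (fun j : Fin N => N - d ≤ (j : ℕ)), lam j := by
  have hN : 0 < N := lt_of_lt_of_le hd hdN
  set b : Fin N → ℝ := fun j => if (j : ℕ) < d then 1 else 0 with hb
  set b' : Fin N → ℝ := fun j => if N - d ≤ (j : ℕ) then 1 else 0 with hb'
  have hbsum : ∑ j, b j = d := by
    rw [hb, Fin.sum_univ_eq_sum_range (fun i => if i < d then (1:ℝ) else 0)]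
    rw [Finset.sum_boole]
    have : (Finset.range N).filter (fun i => i < d) = Finset.range d := by
      ext i; simp; omega
    rw [this, Finset.card_range]
  have hb'sum : ∑ j, b' j = d := by
    rw [hb', Fin.sum_univ_eq_sum_range (fun i => if N - d ≤ i then (1:ℝ) else 0)]
    rw [Finset.sum_boole]
    have : (Finset.range N).filter (fun i => N - d ≤ i) = Finset.Ico (N - d) N := by
      ext i; simp; omega
    rw [this, Nat.card_Ico]
    congr 1; omega
  have hblam : ∑ j, b j * lam j = ∑ j ∈ Finset.univ.filter (fun j : Fin N => (j : ℕ) < d), lam j := by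
    rw [Finset.sum_filter]; simp [hb, ite_mul]
  have hb'lam : ∑ j, b' j * lam j = ∑ j ∈ Finset.univ.filter (fun j : Fin N => N - d ≤ (j : ℕ)), lam j := by
    rw [Finset.sum_filter]; simp [hb', ite_mul]
  constructor
  · set t : ℝ := lam ⟨d - 1, by omega⟩ with ht
    have key : 0 ≤ ∑ j, (c j - b j) * (lam j - t) := by
      apply Finset.sum_nonneg
      intro j _
      by_cases hj : (j : ℕ) < d
      · have hbj : b j = 1 := by simp [hb, hj]
        have h1' : lam j ≤ t := hmono (by simp only [Fin.le_def]; omega)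
        rw [hbj]
        nlinarith [h1 j]
      · have hbj : b j = 0 := by simp [hb, hj]
        have h2' : t ≤ lam j := hmono (by simp only [Fin.le_def]; omega)
        rw [hbj]
        nlinarith [h0 j]
    have expand : ∑ j, (c j - b j) * (lam j - t)
        = (∑ j, c j * lam j) - (∑ j, b j * lam j) - ((∑ j, c j) - (∑ j, b j)) * t := by
      simp only [sub_mul, mul_sub, Finset.sum_sub_distrib, Finset.sum_mul]
      try ring
    rw [expand, hs, hbsum] at key
    linarith [hblam]
  · set t : ℝ := lam ⟨N - d, by omega⟩ with ht
    have key : 0 ≤ ∑ j, (b' j - c j) * (lam j - t) := by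
      apply Finset.sum_nonneg
      intro j _
      by_cases hj : N - d ≤ (j : ℕ)
      · have hbj : b' j = 1 := by simp [hb']; omega
        have h2' : t ≤ lam j := hmono (by simp only [Fin.le_def]; omega)
        rw [hbj]
        nlinarith [h1 j]
      · have hbj : b' j = 0 := by simp [hb']; omega
        have h1' : lam j ≤ t := hmono (by simp only [Fin.le_def]; omega)
        rw [hbj]
        nlinarith [h0 j]
    have expand : ∑ j, (b' j - c j) * (lam j - t)
        = (∑ j, b' j * lam j) - (∑ j, c j * lam j) - ((∑ j, b' j) - (∑ j, c j)) * t := by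
      simp only [sub_mul, mul_sub, Finset.sum_sub_distrib, Finset.sum_mul]
      try ring
    rw [expand, hs, hb'sum] at key
    linarith [hb'lam]

lemma trace_diag_eq {N d : ℕ} (lam : Fin N → ℝ) (G : Matrix (Fin d) (Fin N) ℝ) :
    Matrix.trace (G * Matrix.diagonal lam * Gᵀ) = ∑ j, (∑ i, (G i j)^2) * lam j := by
  rw [Matrix.trace_mul_comm, ← Matrix.mul_assoc, Matrix.trace]
  simp only [Matrix.diag_apply, Matrix.mul_diagonal]
  refine Finset.sum_congr rfl fun j _ => ?_
  congr 1
  simp [Matrix.mul_apply, sq]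

lemma col_norm_le_one {N d : ℕ} (G : Matrix (Fin d) (Fin N) ℝ) (hG : G * Gᵀ = 1)
    (j : Fin N) : 0 ≤ ∑ i, (G i j)^2 ∧ (∑ i, (G i j)^2) ≤ 1 := by
  set Q : Matrix (Fin N) (Fin N) ℝ := Gᵀ * G with hQdef
  have hQ2 : Q * Q = Q := by
    rw [hQdef, Matrix.mul_assoc, ← Matrix.mul_assoc G, hG, Matrix.one_mul]
  have hQjj : Q j j = ∑ i, (G i j)^2 := by
    simp [hQdef, Matrix.mul_apply, sq]
  have hsq : Q j j = ∑ k, (Q j k)^2 := by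
    conv_lhs => rw [← hQ2]
    rw [Matrix.mul_apply]
    refine Finset.sum_congr rfl fun k _ => ?_
    have hsym : Q k j = Q j k := by
      simp [hQdef, Matrix.mul_apply, mul_comm]
    rw [hsym, sq]
  have h0 : 0 ≤ Q j j := by
    rw [hsq]; exact Finset.sum_nonneg fun k _ => sq_nonneg _
  have hle : (Q j j)^2 ≤ Q j j :=
    calc (Q j j)^2 ≤ ∑ k, (Q j k)^2 :=
          Finset.single_le_sum (fun k _ => sq_nonneg (Q j k)) (Finset.mem_univ j)
    _ = Q j j := hsq.symm
  constructor
  · rw [← hQjj]; exact h0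
  · rw [← hQjj]; nlinarith

lemma col_norm_sum {N d : ℕ} (G : Matrix (Fin d) (Fin N) ℝ) (hG : G * Gᵀ = 1) :
    ∑ j, ∑ i, (G i j)^2 = (d : ℝ) := by
  rw [Finset.sum_comm]
  have : ∀ i, ∑ j, (G i j)^2 = (G * Gᵀ) i i := by
    intro i; simp [Matrix.mul_apply, sq]
  simp_rw [this, hG]
  simp [Matrix.one_apply]

lemma sel_matrix {N d : ℕ} (f : Fin d → Fin N) (hf : Function.Injective f) (lam : Fin N → ℝ) :
    (Matrix.of fun (i : Fin d) (j : Fin N) => if f i = j then (1:ℝ) else 0) *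
      (Matrix.of fun (i : Fin d) (j : Fin N) => if f i = j then (1:ℝ) else 0)ᵀ = 1 ∧
    Matrix.trace ((Matrix.of fun (i : Fin d) (j : Fin N) => if f i = j then (1:ℝ) else 0) *
      Matrix.diagonal lam *
      (Matrix.of fun (i : Fin d) (j : Fin N) => if f i = j then (1:ℝ) else 0)ᵀ) = ∑ i, lam (f i) := by
  constructor
  · ext i i'
    simp [Matrix.mul_apply, Matrix.one_apply, ite_mul, Finset.sum_ite_eq, hf.eq_iff, eq_comm]
  · rw [Matrix.trace]
    simp [Matrix.diag_apply, Matrix.mul_apply, Matrix.mul_diagonal, ite_mul, mul_ite,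
      Finset.sum_ite_eq]



/-- A simple (loopless, undirected) connected weighted graph on `N` vertices,
presented via its weight function. -/
structure GraphLaplacian (N : ℕ) where
  w : Fin N → Fin N → ℝ
  symm : ∀ i j, w i j = w j i
  nonneg : ∀ i j, 0 ≤ w i j
  loopless : ∀ i, w i i = 0
  connected : ∀ i j : Fin N, Relation.ReflTransGen (fun a b => 0 < w a b) i j

/-- The graph Laplacian `L = D - A`. -/
def GraphLaplacian.L {N : ℕ} (G : GraphLaplacian N) : Matrix (Fin N) (Fin N) ℝ :=
  fun i j => if i = j then ∑ k, G.w i k else -G.w i j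

/-- frame uncertainty: for any `d × N` Parseval frame `E` (`E Eᵀ = 1`),
`∑_{j<d} λ̃_j ≤ ‖D_r χᵀ Eᵀ‖²_fr + ‖D_r Eᵀ‖²_fr ≤ ∑_{j ≥ N-d} λ̃_j`, where `λ̃₀ ≤ ⋯ ≤ λ̃_{N-1}`
are the eigenvalues of `L + Δ`; both bounds are attained by suitable Parseval frames. -/
theorem graph_frame_uncertainty {N d Ecard : ℕ} (hd : 2 ≤ d) (hdN : d ≤ N)
    (G : GraphLaplacian N)
    (Dr : Matrix (Fin Ecard) (Fin N) ℝ) (hDr : Drᵀ * Dr = G.L)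
    (χ : Matrix (Fin N) (Fin N) ℝ) (lamΔ : Fin N → ℝ)
    (hχ : χᵀ * χ = 1)
    (hdiag : χᵀ * G.L * χ = Matrix.diagonal lamΔ)
    (lam : Fin N → ℝ) (P : Matrix (Fin N) (Fin N) ℝ)
    (hP : Pᵀ * P = 1)
    (hPdiag : Pᵀ * (G.L + Matrix.diagonal lamΔ) * P = Matrix.diagonal lam)
    (hmono : Monotone lam)
    (E : Matrix (Fin d) (Fin N) ℝ) (hE : E * Eᵀ = 1) :
    ((∑ j ∈ Finset.univ.filter (fun j : Fin N => (j : ℕ) < d), lam j) ≤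
        Matrix.trace ((Dr * χᵀ * Eᵀ)ᵀ * (Dr * χᵀ * Eᵀ)) +
          Matrix.trace ((Dr * Eᵀ)ᵀ * (Dr * Eᵀ)) ∧
      Matrix.trace ((Dr * χᵀ * Eᵀ)ᵀ * (Dr * χᵀ * Eᵀ)) +
          Matrix.trace ((Dr * Eᵀ)ᵀ * (Dr * Eᵀ)) ≤
        ∑ j ∈ Finset.univ.filter (fun j : Fin N => N - d ≤ (j : ℕ)), lam j) ∧
    (∃ E' : Matrix (Fin d) (Fin N) ℝ, E' * E'ᵀ = 1 ∧
      Matrix.trace ((Dr * χᵀ * E'ᵀ)ᵀ * (Dr * χᵀ * E'ᵀ)) +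
          Matrix.trace ((Dr * E'ᵀ)ᵀ * (Dr * E'ᵀ)) =
        ∑ j ∈ Finset.univ.filter (fun j : Fin N => (j : ℕ) < d), lam j) ∧
    (∃ E' : Matrix (Fin d) (Fin N) ℝ, E' * E'ᵀ = 1 ∧
      Matrix.trace ((Dr * χᵀ * E'ᵀ)ᵀ * (Dr * χᵀ * E'ᵀ)) +
          Matrix.trace ((Dr * E'ᵀ)ᵀ * (Dr * E'ᵀ)) =
        ∑ j ∈ Finset.univ.filter (fun j : Fin N => N - d ≤ (j : ℕ)), lam j) := by
  have hd1 : 1 ≤ d := le_trans one_le_two hd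
  have hχχ : χ * χᵀ = 1 := mul_eq_one_comm.mp hχ
  have hPP : P * Pᵀ = 1 := mul_eq_one_comm.mp hP
  have hPP' : ∀ (X : Matrix (Fin N) (Fin d) ℝ), P * (Pᵀ * X) = X := by
    intro X; rw [← Matrix.mul_assoc, hPP, Matrix.one_mul]
  have hχχ' : ∀ (X : Matrix (Fin N) (Fin d) ℝ), χ * (χᵀ * X) = X := by
    intro X; rw [← Matrix.mul_assoc, hχχ, Matrix.one_mul]
  have hχ' : ∀ (X : Matrix (Fin N) (Fin d) ℝ), χᵀ * (χ * X) = X := by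
    intro X; rw [← Matrix.mul_assoc, hχ, Matrix.one_mul]
  have hχ'N : ∀ (X : Matrix (Fin N) (Fin N) ℝ), χᵀ * (χ * X) = X := by
    intro X; rw [← Matrix.mul_assoc, hχ, Matrix.one_mul]
  have hP' : ∀ (X : Matrix (Fin N) (Fin d) ℝ), Pᵀ * (P * X) = X := by
    intro X; rw [← Matrix.mul_assoc, hP, Matrix.one_mul]
  have hDr' : ∀ (X : Matrix (Fin N) (Fin d) ℝ), Drᵀ * (Dr * X) = G.L * X := by
    intro X; rw [← Matrix.mul_assoc, hDr]
  set M : Matrix (Fin N) (Fin N) ℝ := G.L + Matrix.diagonal lamΔ with hMdef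
  have hMdiag : M = P * Matrix.diagonal lam * Pᵀ := by
    calc M = (P * Pᵀ) * M * (P * Pᵀ) := by rw [hPP, Matrix.one_mul, Matrix.mul_one]
    _ = P * (Pᵀ * M * P) * Pᵀ := by simp only [Matrix.mul_assoc]
    _ = P * Matrix.diagonal lam * Pᵀ := by rw [hPdiag]
  have e4 : χ * M * χᵀ = χ * G.L * χᵀ + G.L := by
    rw [hMdef, Matrix.mul_add, Matrix.add_mul, ← hdiag]
    congr 1
    calc χ * (χᵀ * G.L * χ) * χᵀ = (χ * χᵀ) * G.L * (χ * χᵀ) := by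
          simp only [Matrix.mul_assoc]
    _ = G.L := by rw [hχχ, Matrix.one_mul, Matrix.mul_one]
  have hQ : ∀ A : Matrix (Fin d) (Fin N) ℝ,
      Matrix.trace ((Dr * χᵀ * Aᵀ)ᵀ * (Dr * χᵀ * Aᵀ)) +
        Matrix.trace ((Dr * Aᵀ)ᵀ * (Dr * Aᵀ))
      = Matrix.trace ((A * χ * P) * Matrix.diagonal lam * (A * χ * P)ᵀ) := by
    intro A
    have e1 : (Dr * χᵀ * Aᵀ)ᵀ * (Dr * χᵀ * Aᵀ) = A * (χ * G.L * χᵀ) * Aᵀ := by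
      simp only [Matrix.transpose_mul, Matrix.transpose_transpose, Matrix.mul_assoc]
      rw [hDr']
    have e2 : (Dr * Aᵀ)ᵀ * (Dr * Aᵀ) = A * G.L * Aᵀ := by
      simp only [Matrix.transpose_mul, Matrix.transpose_transpose, Matrix.mul_assoc]
      rw [hDr']
    have e3 : (A * χ * P) * Matrix.diagonal lam * (A * χ * P)ᵀ = A * (χ * M * χᵀ) * Aᵀ := by
      rw [hMdiag]
      simp only [Matrix.transpose_mul, Matrix.transpose_transpose, Matrix.mul_assoc]
    rw [e1, e2, e3, e4, Matrix.mul_add, Matrix.add_mul, Matrix.trace_add]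
  -- the selection functions
  set f1 : Fin d → Fin N := fun i => ⟨(i : ℕ), lt_of_lt_of_le i.isLt hdN⟩ with hf1def
  have hf1 : Function.Injective f1 := by
    intro a b h
    have := congrArg Fin.val h
    exact Fin.ext this
  have himg1 : Finset.univ.filter (fun j : Fin N => (j : ℕ) < d)
      = Finset.image f1 Finset.univ := by
    ext j
    simp only [Finset.mem_filter, Finset.mem_univ, true_and, Finset.mem_image]
    constructor
    · intro h; exact ⟨⟨(j : ℕ), h⟩, by apply Fin.ext; simp [hf1def]⟩
    · rintro ⟨i, rfl⟩; simpa [hf1def] using i.isLt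
  have hsum1 : ∑ j ∈ Finset.univ.filter (fun j : Fin N => (j : ℕ) < d), lam j
      = ∑ i, lam (f1 i) := by
    rw [himg1, Finset.sum_image (fun a _ b _ h => hf1 h)]
  set f2 : Fin d → Fin N := fun i => ⟨N - d + (i : ℕ), by omega⟩ with hf2def
  have hf2 : Function.Injective f2 := by
    intro a b h
    have := congrArg Fin.val h
    simp only [hf2def] at this
    exact Fin.ext (by omega)
  have himg2 : Finset.univ.filter (fun j : Fin N => N - d ≤ (j : ℕ))
      = Finset.image f2 Finset.univ := by
    ext j
    simp only [Finset.mem_filter, Finset.mem_univ, true_and, Finset.mem_image]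
    constructor
    · intro h
      have hjlt := j.isLt
      refine ⟨⟨(j : ℕ) - (N - d), by omega⟩, ?_⟩
      apply Fin.ext; simp only [hf2def]; omega
    · rintro ⟨i, rfl⟩; simp [hf2def]
  have hsum2 : ∑ j ∈ Finset.univ.filter (fun j : Fin N => N - d ≤ (j : ℕ)), lam j
      = ∑ i, lam (f2 i) := by
    rw [himg2, Finset.sum_image (fun a _ b _ h => hf2 h)]
  refine ⟨?_, ?_, ?_⟩
  · -- bounds for E
    set G' : Matrix (Fin d) (Fin N) ℝ := E * χ * P with hG'def
    have hG' : G' * G'ᵀ = 1 := by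
      rw [hG'def]
      simp only [Matrix.transpose_mul, Matrix.transpose_transpose, Matrix.mul_assoc]
      rw [hPP', hχχ', hE]
    have hb := sum_bounds_aux hd1 hdN lam hmono (fun j => ∑ i, (G' i j)^2)
      (fun j => (col_norm_le_one G' hG' j).1) (fun j => (col_norm_le_one G' hG' j).2)
      (col_norm_sum G' hG')
    rw [hQ E, trace_diag_eq]
    exact hb
  · -- attain minimum
    set S : Matrix (Fin d) (Fin N) ℝ :=
      Matrix.of fun (i : Fin d) (j : Fin N) => if f1 i = j then (1:ℝ) else 0 with hSdef
    obtain ⟨hS1, hS2⟩ := sel_matrix f1 hf1 lam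
    refine ⟨S * Pᵀ * χᵀ, ?_, ?_⟩
    · simp only [Matrix.transpose_mul, Matrix.transpose_transpose, Matrix.mul_assoc]
      rw [hχ', hP']
      exact hS1
    · have hSP : (S * Pᵀ * χᵀ) * χ * P = S := by
        rw [Matrix.mul_assoc (S * Pᵀ) χᵀ χ, hχ, Matrix.mul_one, Matrix.mul_assoc, hP,
          Matrix.mul_one]
      rw [hQ, hSP, hS2, hsum1]
  · -- attain maximum
    set S : Matrix (Fin d) (Fin N) ℝ :=
      Matrix.of fun (i : Fin d) (j : Fin N) => if f2 i = j then (1:ℝ) else 0 with hSdef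
    obtain ⟨hS1, hS2⟩ := sel_matrix f2 hf2 lam
    refine ⟨S * Pᵀ * χᵀ, ?_, ?_⟩
    · simp only [Matrix.transpose_mul, Matrix.transpose_transpose, Matrix.mul_assoc]
      rw [hχ', hP']
      exact hS1
    · have hSP : (S * Pᵀ * χᵀ) * χ * P = S := by
        rw [Matrix.mul_assoc (S * Pᵀ) χᵀ χ, hχ, Matrix.mul_one, Matrix.mul_assoc, hP,
          Matrix.mul_one]
      rw [hQ, hSP, hS2, hsum2]
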